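/- For coprime positive integers $a, b$, the Dedekind sum admits the cotangent representation $s(a,b) = \frac{1}{4b} \sum_{k=1}^{b-1} \cot\frac{\pi k a}{b} \cot\frac{\pi k}{b}$. -/

import Mathlib

open Finset Classical in
/-- The sawtooth function `((x))`. -/
noncomputable def saw (x : ℝ) : ℝ :=
  if ∃ m : ℤ, (m : ℝ) = x then 0 else Int.fract x - 1/2

/-- The classical Dedekind sum `s(a,b)`. -/
noncomputable def dedekindSum (a b : ℕ) : ℝ :=
  ∑ k ∈ Finset.range b, saw (k * a / b) * saw (k / b)

open Finset Complex

-- geometric root-of-unity sums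
lemma rou_sum_zero {b : ℕ} {z : ℂ} (hz : z ^ b = 1) (h1 : z ≠ 1) :
    ∑ k ∈ range b, z ^ k = 0 := by
  rw [geom_sum_eq h1, hz, sub_self, zero_div]

lemma rou_sum_mul {b : ℕ} {z : ℂ} (hz : z ^ b = 1) (h1 : z ≠ 1) :
    ∑ k ∈ range b, (k : ℂ) * z ^ k = b / (z - 1) := by
  have hz1 : z - 1 ≠ 0 := sub_ne_zero.mpr h1
  rw [eq_div_iff hz1]
  have key : (∑ k ∈ range b, (k : ℂ) * z ^ k) * (z - 1)
      = ∑ k ∈ range b, (((k+1 : ℕ) : ℂ) * z ^ (k+1) - (k : ℂ) * z ^ k)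
        - z * ∑ k ∈ range b, z ^ k := by
    rw [Finset.sum_mul, Finset.mul_sum, Finset.sum_sub_distrib, ← Finset.sum_sub_distrib,
      ← Finset.sum_sub_distrib]
    apply Finset.sum_congr rfl; intro k _; push_cast; ring
  rw [key, Finset.sum_range_sub (fun k => (k : ℂ) * z ^ k), rou_sum_zero hz h1, hz]
  simp

lemma cot_complex (x : ℝ) (h : Complex.exp (2 * x * I) ≠ 1) :
    (Real.cot x : ℂ) = I * (Complex.exp (2 * x * I) + 1) / (Complex.exp (2 * x * I) - 1) := by
  set e := Complex.exp ((x : ℂ) * I) with he_def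
  have he : e ≠ 0 := Complex.exp_ne_zero _
  have h2 : Complex.exp (2 * x * I) = e * e := by
    rw [he_def, ← Complex.exp_add]; ring_nf
  have hterm : Complex.exp (-(x:ℂ) * I) = e⁻¹ := by
    rw [he_def, ← Complex.exp_neg]; ring_nf
  rw [h2] at h ⊢
  have hd : e * e - 1 ≠ 0 := sub_ne_zero.mpr h
  have hs : Complex.sin x ≠ 0 := by
    intro hc
    rw [Complex.sin, hterm] at hc
    field_simp [Complex.I_ne_zero, sub_eq_zero] at hc
    have h1 : e * e = 1 := by
      rw [mul_zero, ← he_def] at hc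
      have := (mul_eq_zero.mp hc).resolve_left Complex.I_ne_zero
      linear_combination -this
    exact h h1
  rw [Complex.ofReal_cot, Complex.cot_eq_cos_div_sin, div_eq_div_iff hs hd,
    Complex.sin, Complex.cos, hterm]
  field_simp
  linear_combination (Complex.I_sq) * (Complex.exp ((x:ℂ)*I)^4 - 1)

lemma perm_sum (a b : ℕ) (hb : 0 < b) (hab : Nat.Coprime a b) :
    ∑ k ∈ range b, (k * a) % b = ∑ k ∈ range b, k := by
  haveI : NeZero b := ⟨hb.ne'⟩
  have hu : IsUnit (a : ZMod b) := (ZMod.isUnit_iff_coprime a b).mpr hab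
  apply Finset.sum_bij (fun k _ => (k * a) % b)
  · intro k hk; exact Finset.mem_range.mpr (Nat.mod_lt _ hb)
  · intro k₁ h₁ k₂ h₂ h
    have e1 : ((k₁ : ZMod b)) * a = (k₂ : ZMod b) * a := by
      have hmod : ((k₁ * a % b : ℕ) : ZMod b) = ((k₂ * a % b : ℕ) : ZMod b) := by rw [h]
      rw [ZMod.natCast_mod, ZMod.natCast_mod] at hmod
      simpa [Nat.cast_mul] using hmod
    have e2 : (k₁ : ZMod b) = k₂ := by
      have := congrArg (fun z => z * (a : ZMod b)⁻¹) e1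
      simpa [mul_assoc, ZMod.mul_inv_of_unit _ hu] using this
    have := congrArg ZMod.val e2
    rwa [ZMod.val_natCast_of_lt (Finset.mem_range.mp h₁),
      ZMod.val_natCast_of_lt (Finset.mem_range.mp h₂)] at this
  · intro m hm
    refine ⟨((m : ZMod b) * (a : ZMod b)⁻¹).val, Finset.mem_range.mpr (ZMod.val_lt _), ?_⟩
    have : ((((m : ZMod b) * (a : ZMod b)⁻¹).val * a : ℕ) : ZMod b) = (m : ZMod b) := by
      push_cast
      rw [ZMod.natCast_zmod_val, mul_assoc, ZMod.inv_mul_of_unit _ hu, mul_one]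
    have hv := congrArg ZMod.val this
    rwa [ZMod.val_natCast, ZMod.val_natCast_of_lt (Finset.mem_range.mp hm)] at hv
  · intro k _; rfl

lemma saw_int (n : ℤ) : saw (n : ℝ) = 0 := by
  unfold saw
  rw [if_pos ⟨n, rfl⟩]

lemma saw_div (n b : ℕ) (hb : 0 < b) (hnd : ¬ b ∣ n) :
    saw ((n : ℝ) / b) = ((n % b : ℕ) : ℝ) / b - 1/2 := by
  unfold saw
  rw [if_neg, Int.fract_div_natCast_eq_div_natCast_mod]
  rintro ⟨m, hm⟩
  apply hnd
  have hb' : (b : ℝ) ≠ 0 := Nat.cast_ne_zero.mpr hb.ne'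
  have : (m * b : ℝ) = n := by rw [hm]; field_simp
  have : (m * b : ℤ) = n := by exact_mod_cast this
  have hmn : (0:ℤ) ≤ m := by nlinarith [this ▸ Int.natCast_nonneg n, Int.natCast_pos.mpr hb]
  refine ⟨m.toNat, ?_⟩
  have h2 : ((m.toNat : ℤ)) * b = n := by rwa [Int.toNat_of_nonneg hmn]
  have h3 : (n : ℤ) = b * m.toNat := by linarith
  exact_mod_cast h3

lemma not_dvd_of_Ico {b k : ℕ} (hk : k ∈ Ico 1 b) : ¬ b ∣ k := by
  rw [Finset.mem_Ico] at hk
  intro h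
  exact absurd (Nat.le_of_dvd (by omega) h) (by omega)

lemma lhs_eval (a b : ℕ) (ha : 0 < a) (hb : 0 < b) (hab : Nat.Coprime a b) :
    dedekindSum a b =
      (1/(b:ℝ)^2) * (∑ k ∈ Ico 1 b, (k:ℝ) * ((k*a) % b : ℕ)) - ((b:ℝ)-1)/4 := by
  have hb' : (b:ℝ) ≠ 0 := Nat.cast_ne_zero.mpr hb.ne'
  have hstep : dedekindSum a b =
      ∑ k ∈ Ico 1 b, ((((k*a) % b : ℕ) : ℝ)/b - 1/2) * ((k:ℝ)/b - 1/2) := by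
    unfold dedekindSum
    rw [Finset.range_eq_Ico, Finset.sum_eq_sum_Ico_succ_bot hb]
    have h0 : saw ((0:ℕ) * (a:ℝ) / b) * saw ((0:ℕ)/(b:ℝ)) = 0 := by
      norm_num
      have : saw 0 = 0 := by simpa using saw_int 0
      simp [this]
    rw [h0, zero_add]
    apply Finset.sum_congr rfl
    intro k hk
    have hks := Finset.mem_Ico.mp hk
    have h1 : ¬ b ∣ k * a := fun h =>
      not_dvd_of_Ico hk (hab.symm.dvd_of_dvd_mul_right h)
    have h2 : ¬ b ∣ k := not_dvd_of_Ico hk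
    have e1 : (k : ℝ) * a / b = ((k*a : ℕ) : ℝ) / b := by push_cast; ring
    rw [e1, saw_div _ _ hb h1, saw_div _ _ hb h2, Nat.mod_eq_of_lt hks.2]
  rw [hstep]
  have hS1 : ∑ k ∈ Ico 1 b, (k:ℝ) = ((b:ℝ)*((b:ℝ)-1))/2 := by
    have hg : (∑ i ∈ range b, i) * 2 = b * (b - 1) := Finset.sum_range_id_mul_two b
    have h0 : ∑ k ∈ Ico 1 b, (k:ℝ) = ∑ k ∈ range b, (k:ℝ) := by
      rw [Finset.range_eq_Ico, Finset.sum_eq_sum_Ico_succ_bot hb]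
      simp
    rw [h0]
    have := congrArg (fun n : ℕ => (n : ℝ)) hg
    push_cast [Nat.cast_sub hb] at this
    linarith
  have hS2 : ∑ k ∈ Ico 1 b, (((k*a) % b : ℕ):ℝ) = ((b:ℝ)*((b:ℝ)-1))/2 := by
    have h0 : ∑ k ∈ Ico 1 b, (((k*a) % b : ℕ):ℝ) = ∑ k ∈ range b, (((k*a) % b : ℕ):ℝ) := by
      rw [Finset.range_eq_Ico, Finset.sum_eq_sum_Ico_succ_bot hb]
      simp
    rw [h0, ← Nat.cast_sum, perm_sum a b hb hab, Nat.cast_sum, ← hS1]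
    rw [Finset.range_eq_Ico, Finset.sum_eq_sum_Ico_succ_bot hb]
    simp
  have hexp : ∀ k ∈ Ico 1 b,
      ((((k*a) % b : ℕ) : ℝ)/b - 1/2) * ((k:ℝ)/b - 1/2)
        = (1/(b:ℝ)^2) * ((k:ℝ) * ((k*a) % b : ℕ))
          - (1/(2*b)) * (((k*a) % b : ℕ):ℝ) - (1/(2*b)) * (k:ℝ) + 1/4 := by
    intro k _; field_simp; ring
  rw [Finset.sum_congr rfl hexp]
  simp only [Finset.sum_add_distrib, Finset.sum_sub_distrib, ← Finset.mul_sum,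
    Finset.sum_const, Nat.card_Ico, nsmul_eq_mul]
  rw [hS1, hS2]
  have hcard : ((b - 1 : ℕ) : ℝ) = (b:ℝ) - 1 := by
    rw [Nat.cast_sub hb]; norm_num
  rw [hcard]
  field_simp
  ring

section RHS

variable (b : ℕ)

noncomputable abbrev zb : ℂ := Complex.exp (2 * Real.pi * I / b)

lemma zb_pow_b (hb : 0 < b) : (zb b) ^ b = 1 :=
  (Complex.isPrimitiveRoot_exp b hb.ne').pow_eq_one

lemma zb_pow_eq_one_iff (hb : 0 < b) (m : ℕ) : (zb b) ^ m = 1 ↔ b ∣ m :=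
  (Complex.isPrimitiveRoot_exp b hb.ne').pow_eq_one_iff_dvd m

lemma rou_orth (hb : 0 < b) (m : ℕ) :
    ∑ j ∈ range b, (zb b) ^ (j * m) = if b ∣ m then (b : ℂ) else 0 := by
  have hpow : ∀ j : ℕ, (zb b) ^ (j * m) = ((zb b) ^ m) ^ j := by
    intro j; rw [← pow_mul, mul_comm]
  simp only [hpow]
  by_cases h : b ∣ m
  · rw [if_pos h]
    have h1 : (zb b) ^ m = 1 := (zb_pow_eq_one_iff b hb m).mpr h
    simp [h1]
  · rw [if_neg h]
    have h1 : (zb b) ^ m ≠ 1 := fun hc => h ((zb_pow_eq_one_iff b hb m).mp hc)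
    have h2 : ((zb b) ^ m) ^ b = 1 := by
      rw [← pow_mul, mul_comm, pow_mul, zb_pow_b b hb, one_pow]
    exact rou_sum_zero h2 h1

lemma rou_orth_Ico (hb : 0 < b) (m : ℕ) :
    ∑ j ∈ Ico 1 b, (zb b) ^ (j * m) = (if b ∣ m then (b : ℂ) else 0) - 1 := by
  have := rou_orth b hb m
  rw [Finset.range_eq_Ico, Finset.sum_eq_sum_Ico_succ_bot hb] at this
  simp only [zero_mul, pow_zero] at this
  linear_combination this

end RHS

lemma gauss_C (b : ℕ) (hb : 0 < b) :
    ∑ k ∈ range b, (k : ℂ) = (b : ℂ) * ((b:ℂ) - 1) / 2 := by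
  have hg : (∑ i ∈ range b, i) * 2 = b * (b - 1) := Finset.sum_range_id_mul_two b
  have := congrArg (fun n : ℕ => (n : ℂ)) hg
  push_cast [Nat.cast_sub hb] at this
  linear_combination this / 2

lemma gauss_C_Ico (b : ℕ) (hb : 0 < b) :
    ∑ k ∈ Ico 1 b, (k : ℂ) = (b : ℂ) * ((b:ℂ) - 1) / 2 := by
  rw [← gauss_C b hb, Finset.range_eq_Ico, Finset.sum_eq_sum_Ico_succ_bot hb]
  simp

/-- Per-term rational form for `I*(u+1)/(u-1)`. -/
lemma cot_rational (b : ℕ) (hb : 0 < b) {u : ℂ} (hu : u ^ b = 1) (h1 : u ≠ 1) :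
    I * (u + 1) / (u - 1) = I + (2 * I / b) * ∑ k ∈ range b, (k : ℂ) * u ^ k := by
  have hb' : (b : ℂ) ≠ 0 := Nat.cast_ne_zero.mpr hb.ne'
  have hu1 : u - 1 ≠ 0 := sub_ne_zero.mpr h1
  rw [rou_sum_mul hu h1]
  field_simp
  ring

/-- Single sum: `∑_{j=1}^{b-1} ∑_k k ζ^{j c k} = -b(b-1)/2` for `c` coprime to `b`. -/
lemma single_sum (b c : ℕ) (hb : 0 < b) (hcb : Nat.Coprime c b) :
    ∑ j ∈ Ico 1 b, ∑ k ∈ range b, (k : ℂ) * ((zb b) ^ (j * c)) ^ k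
      = -((b:ℂ) * ((b:ℂ) - 1) / 2) := by
  have hswap : ∑ j ∈ Ico 1 b, ∑ k ∈ range b, (k : ℂ) * ((zb b) ^ (j * c)) ^ k
      = ∑ k ∈ range b, (k : ℂ) * ∑ j ∈ Ico 1 b, (zb b) ^ (j * (c * k)) := by
    rw [Finset.sum_comm]
    apply Finset.sum_congr rfl; intro k _
    rw [Finset.mul_sum]
    apply Finset.sum_congr rfl; intro j _
    rw [← pow_mul]
    ring_nf
  rw [hswap]
  have hterm : ∀ k ∈ range b, (k : ℂ) * ∑ j ∈ Ico 1 b, (zb b) ^ (j * (c * k))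
      = -(k : ℂ) := by
    intro k hk
    rw [rou_orth_Ico b hb]
    rcases Nat.eq_zero_or_pos k with rfl | hkpos
    · simp
    · rw [if_neg, zero_sub, mul_neg, mul_one]
      intro hdvd
      have : b ∣ k := hcb.symm.dvd_of_dvd_mul_left hdvd
      exact absurd (Nat.le_of_dvd hkpos this) (by have := Finset.mem_range.mp hk; omega)
  rw [Finset.sum_congr rfl hterm, Finset.sum_neg_distrib, gauss_C b hb]

lemma dvd_add_iff_eq (b m l : ℕ) (hb : 0 < b) (hl : l < b) (hr : m % b ≠ 0) :
    b ∣ m + l ↔ l = b - m % b := by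
  have hmod : (m + l) % b = (m % b + l) % b := by
    rw [Nat.add_mod, Nat.mod_eq_of_lt hl]
  rw [Nat.dvd_iff_mod_eq_zero, hmod]
  have hrb : m % b < b := Nat.mod_lt _ hb
  constructor
  · intro h
    by_cases hc : m % b + l < b
    · rw [Nat.mod_eq_of_lt hc] at h; omega
    · have h2 : m % b + l - b < b := by omega
      rw [Nat.mod_eq_sub_mod (by omega), Nat.mod_eq_of_lt h2] at h
      omega
  · intro h
    have : m % b + l = b := by omega
    rw [this, Nat.mod_self]

lemma inner_l (b m : ℕ) (hb : 0 < b) (hr : m % b ≠ 0) :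
    ∑ l ∈ range b, (l : ℂ) * (if b ∣ m + l then (b : ℂ) else 0)
      = (b : ℂ) * ((b : ℂ) - (m % b : ℕ)) := by
  have hrb : m % b < b := Nat.mod_lt _ hb
  rw [Finset.sum_eq_single (b - m % b)]
  · rw [if_pos, Nat.cast_sub hrb.le]
    · ring
    · rw [dvd_add_iff_eq b m _ hb (by omega) hr]
  · intro l hl hne
    rw [if_neg, mul_zero]
    rw [dvd_add_iff_eq b m _ hb (Finset.mem_range.mp hl) hr]
    exact hne
  · intro h
    exact absurd (Finset.mem_range.mpr (by omega)) h

lemma sum_range_split {M : Type*} [AddCommMonoid M] (f : ℕ → M) {b : ℕ} (hb : 0 < b) :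
    ∑ k ∈ range b, f k = f 0 + ∑ k ∈ Ico 1 b, f k := by
  rw [Finset.range_eq_Ico, Finset.sum_eq_sum_Ico_succ_bot hb]

lemma double_sum (a b : ℕ) (hb : 0 < b) (hab : Nat.Coprime a b) :
    ∑ j ∈ Ico 1 b, ((∑ k ∈ range b, (k : ℂ) * ((zb b) ^ (j * a)) ^ k) *
        (∑ l ∈ range b, (l : ℂ) * ((zb b) ^ j) ^ l))
      = (b:ℂ) * (b:ℂ) * ((b:ℂ)*((b:ℂ)-1)/2)
        - (b:ℂ) * (∑ k ∈ Ico 1 b, (k:ℂ) * (((k*a) % b : ℕ):ℂ))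
        - ((b:ℂ)*((b:ℂ)-1)/2)^2 := by
  have hprod : ∀ j, ((∑ k ∈ range b, (k : ℂ) * ((zb b) ^ (j * a)) ^ k) *
        (∑ l ∈ range b, (l : ℂ) * ((zb b) ^ j) ^ l))
      = ∑ k ∈ range b, ∑ l ∈ range b, ((k:ℂ) * l) * (zb b) ^ (j * (k * a + l)) := by
    intro j
    rw [Finset.sum_mul_sum]
    apply Finset.sum_congr rfl; intro k _
    apply Finset.sum_congr rfl; intro l _
    rw [← pow_mul, ← pow_mul, show j * (k * a + l) = j * a * k + j * l by ring, pow_add]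
    ring
  simp only [hprod]
  rw [Finset.sum_comm]
  have hswap : ∀ k ∈ range b, ∑ j ∈ Ico 1 b, ∑ l ∈ range b,
        ((k:ℂ) * l) * (zb b) ^ (j * (k * a + l))
      = ∑ l ∈ range b, ((k:ℂ) * l) * ((if b ∣ k * a + l then (b:ℂ) else 0) - 1) := by
    intro k _
    rw [Finset.sum_comm]
    apply Finset.sum_congr rfl; intro l _
    rw [← Finset.mul_sum, rou_orth_Ico b hb]
  rw [Finset.sum_congr rfl hswap]
  have hsplit : ∀ k ∈ range b, ∑ l ∈ range b,
        ((k:ℂ) * l) * ((if b ∣ k * a + l then (b:ℂ) else 0) - 1)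
      = (k:ℂ) * (∑ l ∈ range b, (l:ℂ) * (if b ∣ k * a + l then (b:ℂ) else 0))
        - (k:ℂ) * ∑ l ∈ range b, (l:ℂ) := by
    intro k _
    rw [Finset.mul_sum, Finset.mul_sum, ← Finset.sum_sub_distrib]
    apply Finset.sum_congr rfl; intro l _
    ring
  rw [Finset.sum_congr rfl hsplit, Finset.sum_sub_distrib]
  have hQ : ∑ k ∈ range b, (k:ℂ) * ∑ l ∈ range b, (l:ℂ)
      = ((b:ℂ)*((b:ℂ)-1)/2)^2 := by
    rw [← Finset.sum_mul, gauss_C b hb]; ring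
  rw [hQ]
  have hP : ∑ k ∈ range b, (k:ℂ) * (∑ l ∈ range b, (l:ℂ) * (if b ∣ k * a + l then (b:ℂ) else 0))
      = (b:ℂ) * (b:ℂ) * ((b:ℂ)*((b:ℂ)-1)/2) - (b:ℂ) * (∑ k ∈ Ico 1 b, (k:ℂ) * (((k*a) % b : ℕ):ℂ)) := by
    rw [sum_range_split (fun k => (k:ℂ) * (∑ l ∈ range b, (l:ℂ) * (if b ∣ k * a + l then (b:ℂ) else 0))) hb]
    rw [Nat.cast_zero, zero_mul, zero_add]
    have hterm : ∀ k ∈ Ico 1 b, (k:ℂ) * (∑ l ∈ range b, (l:ℂ) * (if b ∣ k * a + l then (b:ℂ) else 0))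
        = (b:ℂ) * (b:ℂ) * (k:ℂ) - (b:ℂ) * ((k:ℂ) * (((k*a) % b : ℕ):ℂ)) := by
      intro k hk
      have hr : (k * a) % b ≠ 0 := by
        rw [Ne, ← Nat.dvd_iff_mod_eq_zero]
        exact fun h => not_dvd_of_Ico hk (hab.symm.dvd_of_dvd_mul_right h)
      rw [inner_l b (k*a) hb hr]
      ring
    rw [Finset.sum_congr rfl hterm, Finset.sum_sub_distrib, ← Finset.mul_sum, ← Finset.mul_sum,
      gauss_C_Ico b hb]
  rw [hP]

lemma rhs_eval (a b : ℕ) (hb : 0 < b) (hab : Nat.Coprime a b) :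
    ((∑ k ∈ Ico 1 b, Real.cot (Real.pi * k * a / b) * Real.cot (Real.pi * k / b) : ℝ) : ℂ)
      = -(b:ℂ)*((b:ℂ)-1) + (4/(b:ℂ)) * ∑ k ∈ Ico 1 b, (k:ℂ) * (((k*a)%b : ℕ):ℂ) := by
  have hb' : (b:ℂ) ≠ 0 := Nat.cast_ne_zero.mpr hb.ne'
  have hne : ∀ j ∈ Ico 1 b, ∀ c : ℕ, Nat.Coprime c b → zb b ^ (j * c) ≠ 1 := by
    intro j hj c hc h
    have hd : b ∣ j * c := (zb_pow_eq_one_iff b hb _).mp h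
    exact not_dvd_of_Ico hj (hc.symm.dvd_of_dvd_mul_right hd)
  have hpow : ∀ j c : ℕ, (zb b ^ (j * c)) ^ b = 1 := by
    intro j c
    rw [← pow_mul, mul_comm, pow_mul, zb_pow_b b hb, one_pow]
  have hexp : ∀ m : ℕ, ∀ x : ℝ, 2 * (x:ℂ) * I = (m : ℂ) * (2 * Real.pi * I / b) →
      Complex.exp (2 * (x:ℂ) * I) = zb b ^ m := by
    intro m x h
    rw [h, Complex.exp_nat_mul]
  have key : ∀ j ∈ Ico 1 b,
      ((Real.cot (Real.pi * j * a / b) * Real.cot (Real.pi * j / b) : ℝ) : ℂ)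
        = I^2 + (I^2*(2/(b:ℂ))) * (∑ k ∈ range b, (k:ℂ) * ((zb b)^(j*a))^k)
            + (I^2*(2/(b:ℂ))) * (∑ l ∈ range b, (l:ℂ) * ((zb b)^j)^l)
            + (I^2*(4/((b:ℂ)*(b:ℂ)))) * ((∑ k ∈ range b, (k:ℂ) * ((zb b)^(j*a))^k)
                * (∑ l ∈ range b, (l:ℂ) * ((zb b)^j)^l)) := by
    intro j hj
    have he1 : Complex.exp (2 * ((Real.pi * j * a / b : ℝ) : ℂ) * I) = zb b ^ (j * a) := by
      apply hexp; push_cast; ring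
    have he2 : Complex.exp (2 * ((Real.pi * j / b : ℝ) : ℂ) * I) = zb b ^ (j * 1) := by
      apply hexp; push_cast; ring
    have h1 := cot_complex (Real.pi * j * a / b) (by rw [he1]; exact hne j hj a hab)
    have h2 := cot_complex (Real.pi * j / b) (by rw [he2]; exact hne j hj 1 (Nat.coprime_one_left b))
    rw [he1] at h1
    rw [he2, mul_one] at h2
    have hu2 : (zb b ^ j) ^ b = 1 := by have := hpow j 1; rwa [mul_one] at this
    have hn2 : zb b ^ j ≠ 1 := by
      have := hne j hj 1 (Nat.coprime_one_left b); rwa [mul_one] at this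
    rw [Complex.ofReal_mul, h1, h2,
      cot_rational b hb (hpow j a) (hne j hj a hab),
      cot_rational b hb hu2 hn2]
    ring
  have hB1 : ∑ j ∈ Ico 1 b, ∑ l ∈ range b, (l:ℂ) * ((zb b)^j)^l
      = -((b:ℂ) * ((b:ℂ) - 1) / 2) := by
    have := single_sum b 1 hb (Nat.coprime_one_left b)
    simpa [mul_one] using this
  rw [Complex.ofReal_sum, Finset.sum_congr rfl key]
  rw [Finset.sum_add_distrib, Finset.sum_add_distrib, Finset.sum_add_distrib,
    ← Finset.mul_sum, ← Finset.mul_sum, ← Finset.mul_sum, Finset.sum_const, Nat.card_Ico]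
  rw [single_sum b a hb hab, hB1, double_sum a b hb hab, Complex.I_sq]
  have hcast : ((b - 1 : ℕ):ℂ) = (b:ℂ) - 1 := by
    rw [Nat.cast_sub hb, Nat.cast_one]
  rw [nsmul_eq_mul, hcast]
  field_simp
  ring

theorem dedekindSum_eq_cot_sum (a b : ℕ) (ha : 0 < a) (hb : 0 < b)
    (hab : Nat.Coprime a b) :
    dedekindSum a b =
      1 / (4 * b) * ∑ k ∈ Finset.Ico 1 b,
        Real.cot (Real.pi * k * a / b) * Real.cot (Real.pi * k / b) := by
  have hb' : (b:ℝ) ≠ 0 := Nat.cast_ne_zero.mpr hb.ne'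
  have hrhs : (∑ k ∈ Ico 1 b, Real.cot (Real.pi * k * a / b) * Real.cot (Real.pi * k / b))
      = -(b:ℝ)*((b:ℝ)-1) + (4/(b:ℝ)) * ∑ k ∈ Ico 1 b, (k:ℝ) * (((k*a)%b : ℕ):ℝ) := by
    have h := rhs_eval a b hb hab
    have h2 : ((-(b:ℝ)*((b:ℝ)-1) + (4/(b:ℝ)) * ∑ k ∈ Ico 1 b, (k:ℝ) * (((k*a)%b : ℕ):ℝ) : ℝ) : ℂ)
        = -(b:ℂ)*((b:ℂ)-1) + (4/(b:ℂ)) * ∑ k ∈ Ico 1 b, (k:ℂ) * (((k*a)%b : ℕ):ℂ) := by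
      push_cast
      ring
    rw [← h2] at h
    exact_mod_cast h
  rw [hrhs, lhs_eval a b ha hb hab]
  field_simp
  ring
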